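/- arXiv:1603.07682 — 8 statements merged into one kernel-verified Lean document; each statement's English description precedes it below -/
import Mathlib

section
/- Fix a probability space, a random value v, an inspection cost c ≥ 0, and strike price σ defined by E[(v - σ)^+] = c. Let A and I be {0,1}-valued random variables (allocation and inspection indicators) with A ≤ I pointwise, and suppose v is independent of I. Let κ = min{σ, v} be the covered call value. Then E[A·v - I·c] ≤ E[A·κ], with equality if and only if P(I = 1, A = 0, v > σ) = 0 (i.e., the policy always 'exercises in the money'). -/
open MeasureTheory ProbabilityTheory

/-- Amortization lemma: for an inspection indicator `I` and allocation indicator `A ≤ I`,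
with `v` independent of `I` and strike price `σ` satisfying `E[(v-σ)⁺] = c`, the net value
`E[A·v - I·c]` is at most the expected covered call value `E[A·min(σ,v)]`, with equality
iff the policy always exercises in the money. -/
theorem covered_call_amortization
    {Ω : Type*} [MeasurableSpace Ω] (μ : Measure Ω) [IsProbabilityMeasure μ]
    (v A I : Ω → ℝ) (hv : Integrable v μ) (hvm : Measurable v)
    (hA : Measurable A) (hI : Measurable I)
    (hA01 : ∀ ω, A ω = 0 ∨ A ω = 1) (hI01 : ∀ ω, I ω = 0 ∨ I ω = 1)
    (hAI : ∀ ω, A ω ≤ I ω)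
    (hindep : IndepFun v I μ)
    (c σ : ℝ) (hc : 0 ≤ c)
    (hσ : ∫ ω, max (v ω - σ) 0 ∂μ = c) :
    (∫ ω, (A ω * v ω - I ω * c) ∂μ) ≤ (∫ ω, A ω * min σ (v ω) ∂μ) ∧
    ((∫ ω, (A ω * v ω - I ω * c) ∂μ) = (∫ ω, A ω * min σ (v ω) ∂μ) ↔
      μ {ω | I ω = 1 ∧ A ω = 0 ∧ σ < v ω} = 0) := by
  set m : Ω → ℝ := fun ω => max (v ω - σ) 0 with hm_def
  have hm_meas : Measurable m := (hvm.sub measurable_const).max measurable_const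
  have hm_int : Integrable m μ := (hv.sub (integrable_const σ)).pos_part
  have hAbd : ∃ C, ∀ x, ‖A x‖ ≤ C := ⟨1, fun x => by rcases hA01 x with h | h <;> simp [h]⟩
  have hIbd : ∃ C, ∀ x, ‖I x‖ ≤ C := ⟨1, fun x => by rcases hI01 x with h | h <;> simp [h]⟩
  have hI_int : Integrable I μ :=
    (integrable_const (1 : ℝ)).bdd_mul hI.aestronglyMeasurable (Filter.Eventually.of_forall hIbd.choose_spec) |>.congr
      (Filter.Eventually.of_forall fun x => by simp)
  have hκ_int : Integrable (fun ω => min σ (v ω)) μ := by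
    have : (fun ω => min σ (v ω)) = fun ω => v ω - m ω := by
      funext ω; rcases le_total (v ω) σ with h | h <;>
        simp [hm_def, min_eq_left, min_eq_right, max_eq_left, max_eq_right, h, sub_nonpos.2 h,
          sub_nonneg.2 h] <;> ring_nf <;> simp [min_eq_right h, min_eq_left h]
    rw [this]; exact hv.sub hm_int
  have hAv : Integrable (fun ω => A ω * v ω) μ := hv.bdd_mul hA.aestronglyMeasurable (Filter.Eventually.of_forall hAbd.choose_spec)
  have hAκ : Integrable (fun ω => A ω * min σ (v ω)) μ :=
    hκ_int.bdd_mul hA.aestronglyMeasurable (Filter.Eventually.of_forall hAbd.choose_spec)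
  have hAm : Integrable (fun ω => A ω * m ω) μ := hm_int.bdd_mul hA.aestronglyMeasurable (Filter.Eventually.of_forall hAbd.choose_spec)
  have hIm : Integrable (fun ω => I ω * m ω) μ := hm_int.bdd_mul hI.aestronglyMeasurable (Filter.Eventually.of_forall hIbd.choose_spec)
  -- independence step: E[I·c] = E[I·m]
  have hindep' : IndepFun m I μ :=
    hindep.comp ((measurable_id.sub measurable_const).max measurable_const) measurable_id
  have hIc : ∫ ω, I ω * c ∂μ = ∫ ω, I ω * m ω ∂μ := by
    have := hindep'.integral_mul_eq_mul_integral hm_int.aestronglyMeasurable hI_int.aestronglyMeasurable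
    have hmul : ∫ ω, I ω * m ω ∂μ = ∫ ω, m ω * I ω ∂μ := by
      congr 1; funext ω; ring
    rw [hmul]
    calc ∫ ω, I ω * c ∂μ = (∫ ω, I ω ∂μ) * c := by
          rw [← integral_mul_const]
      _ = (∫ ω, m ω ∂μ) * ∫ ω, I ω ∂μ := by rw [hσ]; ring
      _ = ∫ ω, m ω * I ω ∂μ := this.symm
  -- pointwise decomposition
  have hpt : ∀ ω, A ω * v ω = A ω * min σ (v ω) + A ω * m ω := by
    intro ω
    have : min σ (v ω) + m ω = v ω := by
      rcases le_total (v ω) σ with h | h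
      · simp [hm_def, min_eq_right h, max_eq_right (sub_nonpos.2 h)]
      · simp [hm_def, min_eq_left h, max_eq_left (sub_nonneg.2 h)]
    linear_combination (A ω) * this.symm
  set g : Ω → ℝ := fun ω => (I ω - A ω) * m ω with hg_def
  have hg_int : Integrable g μ := by
    have : g = fun ω => I ω * m ω - A ω * m ω := by funext ω; simp [hg_def]; ring
    rw [this]; exact hIm.sub hAm
  have hg_nonneg : ∀ ω, 0 ≤ g ω :=
    fun ω => mul_nonneg (sub_nonneg.2 (hAI ω)) (le_max_right _ _)
  have key : ∫ ω, (A ω * v ω - I ω * c) ∂μ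
      = (∫ ω, A ω * min σ (v ω) ∂μ) - ∫ ω, g ω ∂μ := by
    have hsub : ∫ ω, (A ω * v ω - I ω * c) ∂μ
        = (∫ ω, A ω * v ω ∂μ) - ∫ ω, I ω * c ∂μ :=
      integral_sub hAv (hI_int.mul_const c)
    have hAv' : ∫ ω, A ω * v ω ∂μ
        = (∫ ω, A ω * min σ (v ω) ∂μ) + ∫ ω, A ω * m ω ∂μ := by
      rw [← integral_add hAκ hAm]
      exact integral_congr_ae (Filter.Eventually.of_forall fun ω => hpt ω)
    have hg' : ∫ ω, g ω ∂μ = (∫ ω, I ω * m ω ∂μ) - ∫ ω, A ω * m ω ∂μ := by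
      rw [← integral_sub hIm hAm]
      congr 1; funext ω; simp [hg_def]; ring
    rw [hsub, hIc, hAv', hg']; ring
  have hint_nonneg : 0 ≤ ∫ ω, g ω ∂μ := integral_nonneg hg_nonneg
  constructor
  · rw [key]; linarith
  · rw [key]
    have hzero : (∫ ω, A ω * min σ (v ω) ∂μ) - (∫ ω, g ω ∂μ)
        = (∫ ω, A ω * min σ (v ω) ∂μ) ↔ ∫ ω, g ω ∂μ = 0 := by
      constructor <;> intro h <;> linarith
    rw [hzero, integral_eq_zero_iff_of_nonneg hg_nonneg hg_int]
    have hset : {ω | I ω = 1 ∧ A ω = 0 ∧ σ < v ω} = {ω | g ω ≠ 0} := by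
      ext ω
      simp only [Set.mem_setOf_eq, hg_def, hm_def, ne_eq, mul_eq_zero, not_or]
      constructor
      · rintro ⟨hI1, hA0, hlt⟩
        refine ⟨by rw [hI1, hA0]; norm_num, ?_⟩
        rw [max_eq_left (le_of_lt (sub_pos.2 hlt))]
        exact ne_of_gt (sub_pos.2 hlt)
      · rintro ⟨hIA, hmne⟩
        have hlt : σ < v ω := by
          by_contra h
          exact hmne (max_eq_right (sub_nonpos.2 (le_of_not_gt h)))
        have hI1 : I ω = 1 ∧ A ω = 0 := by
          rcases hI01 ω with h1 | h1 <;> rcases hA01 ω with h2 | h2 <;>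
            simp [h1, h2] at hIA ⊢
          · exact absurd (hAI ω) (by rw [h1, h2]; norm_num)
        exact ⟨hI1.1, hI1.2, hlt⟩
    rw [hset, Filter.EventuallyEq, ae_iff]
    simp only [Pi.zero_apply]
end

section
/- In the setting of n bidders with covered call values κ_1, ..., κ_n, any procedure that (a) always exercises in the money for every bidder (E[A_i v_i - I_i c_i] = E[A_i κ_i] for all i), and (b) always allocates the item to a bidder attaining max_i κ_i whenever that maximum is nonnegative, achieves expected welfare equal to E[max_i κ_i^+], hence is first-best optimal. -/
open MeasureTheory

/-- First-best characterization: a procedure that (a) always exercises in the money for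
every bidder (so `E[A_i v_i - I_i c_i] = E[A_i κ_i]`) and (b) allocates to a bidder
attaining the maximum covered call value whenever it is nonnegative (and does not
allocate otherwise) achieves expected welfare `E[(max_i κ_i)⁺]`. -/
theorem first_best_welfare
    {Ω : Type*} [MeasurableSpace Ω] (μ : Measure Ω) [IsProbabilityMeasure μ]
    (n : ℕ) [NeZero n]
    (v : Fin n → Ω → ℝ) (A I : Fin n → Ω → ℝ) (c σ : Fin n → ℝ)
    (hv : ∀ i, Integrable (v i) μ) (hvm : ∀ i, Measurable (v i))
    (hA : ∀ i, Measurable (A i)) (hI : ∀ i, Measurable (I i))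
    (hA01 : ∀ i ω, A i ω = 0 ∨ A i ω = 1) (hI01 : ∀ i ω, I i ω = 0 ∨ I i ω = 1)
    (hAI : ∀ i ω, A i ω ≤ I i ω)
    (hsum : ∀ ω, ∑ i, A i ω ≤ 1)
    (ha : ∀ i, (∫ ω, (A i ω * v i ω - I i ω * c i) ∂μ) =
               ∫ ω, A i ω * min (σ i) (v i ω) ∂μ)
    (hb : ∀ ω, 0 ≤ Finset.univ.sup' Finset.univ_nonempty (fun j => min (σ j) (v j ω)) →
          ∃ i, A i ω = 1 ∧
            min (σ i) (v i ω) =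
              Finset.univ.sup' Finset.univ_nonempty (fun j => min (σ j) (v j ω)))
    (hb' : ∀ ω, Finset.univ.sup' Finset.univ_nonempty (fun j => min (σ j) (v j ω)) < 0 →
          ∀ i, A i ω = 0) :
    (∫ ω, ∑ i, (A i ω * v i ω - I i ω * c i) ∂μ) =
      ∫ ω, max (Finset.univ.sup' Finset.univ_nonempty (fun j => min (σ j) (v j ω))) 0 ∂μ := by
  have hAbd : ∀ i, ∃ C, ∀ ω, ‖A i ω‖ ≤ C := by
    intro i
    exact ⟨1, fun ω => by rcases hA01 i ω with h | h <;> simp [h]⟩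
  have hκint : ∀ i, Integrable (fun ω => min (σ i) (v i ω)) μ := fun i =>
    (integrable_const (σ i)).inf (hv i)
  have hAκint : ∀ i, Integrable (fun ω => A i ω * min (σ i) (v i ω)) μ := fun i =>
    (hκint i).bdd_mul (hA i).aestronglyMeasurable (Filter.Eventually.of_forall (hAbd i).choose_spec)
  have hterm : ∀ i, Integrable (fun ω => A i ω * v i ω - I i ω * c i) μ := by
    intro i
    refine Integrable.sub ((hv i).bdd_mul (hA i).aestronglyMeasurable (Filter.Eventually.of_forall (hAbd i).choose_spec)) ?_
    refine (integrable_const (c i)).bdd_mul (c := 1) (hI i).aestronglyMeasurable ?_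
    exact Filter.Eventually.of_forall (fun ω => by rcases hI01 i ω with h | h <;> simp [h])
  -- pointwise: sum of A_i κ_i equals positive part of the sup
  have hpt : ∀ ω, ∑ i, A i ω * min (σ i) (v i ω) =
      max (Finset.univ.sup' Finset.univ_nonempty (fun j => min (σ j) (v j ω))) 0 := by
    intro ω
    set S := Finset.univ.sup' Finset.univ_nonempty (fun j => min (σ j) (v j ω)) with hS
    rcases lt_or_ge S 0 with hlt | hge
    · rw [max_eq_right hlt.le]
      exact Finset.sum_eq_zero fun i _ => by rw [hb' ω hlt i, zero_mul]
    · rw [max_eq_left hge]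
      obtain ⟨i, hAi, hκi⟩ := hb ω hge
      have hzero : ∀ j ∈ Finset.univ, j ≠ i → A j ω * min (σ j) (v j ω) = 0 := by
        intro j _ hji
        have hAnn : ∀ k, 0 ≤ A k ω := fun k => by
          rcases hA01 k ω with h | h <;> simp [h]
        have hj0 : A j ω = 0 := by
          by_contra h
          have hj1 : A j ω = 1 := (hA01 j ω).resolve_left h
          have : (2 : ℝ) ≤ ∑ k, A k ω := by
            have := Finset.add_sum_erase Finset.univ (fun k => A k ω)
              (Finset.mem_univ i)
            have hj_mem : j ∈ Finset.univ.erase i := Finset.mem_erase.2 ⟨hji, Finset.mem_univ j⟩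
            have h2 : A j ω ≤ ∑ k ∈ Finset.univ.erase i, A k ω :=
              Finset.single_le_sum (fun k _ => hAnn k) hj_mem
            calc (2 : ℝ) = 1 + 1 := by norm_num
              _ ≤ A i ω + ∑ k ∈ Finset.univ.erase i, A k ω := by
                  rw [hAi]; linarith [h2, hj1]
              _ = ∑ k, A k ω := this
          linarith [hsum ω]
        rw [hj0, zero_mul]
      rw [Finset.sum_eq_single_of_mem i (Finset.mem_univ i) hzero, hAi, one_mul, hκi]
  calc (∫ ω, ∑ i, (A i ω * v i ω - I i ω * c i) ∂μ)
      = ∑ i, ∫ ω, (A i ω * v i ω - I i ω * c i) ∂μ :=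
        integral_finset_sum _ (fun i _ => hterm i)
    _ = ∑ i, ∫ ω, A i ω * min (σ i) (v i ω) ∂μ := by simp_rw [ha]
    _ = ∫ ω, ∑ i, A i ω * min (σ i) (v i ω) ∂μ :=
        (integral_finset_sum _ (fun i _ => hAκint i)).symm
    _ = ∫ ω, max (Finset.univ.sup' Finset.univ_nonempty (fun j => min (σ j) (v j ω))) 0 ∂μ := by
        exact integral_congr_ae (Filter.Eventually.of_forall hpt)
end

section
/- Let X_1, ..., X_n be independent nonnegative real random variables such that the distribution of X* = max_i X_i has no point masses, and let π be the median of X*. Define Z to be X_i for the smallest index i with X_i > π, and Z = 0 if no such index exists. Then E[Z] ≥ (1/2)·E[X*]. -/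
open MeasureTheory ProbabilityTheory

open Classical in
/-- Prophet inequality (Krengel–Sucheston, Samuel-Cahn): if `X_1,…,X_n` are independent
nonnegative random variables, the distribution of `X* = max_i X_i` has no point masses,
and `π` is the median of `X*`, then the value `Z` obtained by stopping at the first
index whose value exceeds `π` (and `0` if none exists) satisfies `E[Z] ≥ (1/2)·E[X*]`. -/
theorem prophet_inequality
    {Ω : Type*} [MeasurableSpace Ω] (μ : Measure Ω) [IsProbabilityMeasure μ]
    (n : ℕ) [NeZero n] (X : Fin n → Ω → ℝ)
    (hXm : ∀ i, Measurable (X i))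
    (hX0 : ∀ i ω, 0 ≤ X i ω)
    (hindep : iIndepFun X μ)
    (hXint : Integrable
      (fun ω => Finset.univ.sup' Finset.univ_nonempty (fun i => X i ω)) μ)
    (hatomless : ∀ r : ℝ,
      μ {ω | Finset.univ.sup' Finset.univ_nonempty (fun i => X i ω) = r} = 0)
    (π : ℝ)
    (hmed1 : μ {ω | Finset.univ.sup' Finset.univ_nonempty (fun i => X i ω) ≤ π} = 1/2)
    (hmed2 : μ {ω | π < Finset.univ.sup' Finset.univ_nonempty (fun i => X i ω)} = 1/2) :
    (1/2) * ∫ ω, Finset.univ.sup' Finset.univ_nonempty (fun i => X i ω) ∂μ ≤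
      ∫ ω, (if h : (Finset.univ.filter (fun i => π < X i ω)).Nonempty
            then X ((Finset.univ.filter (fun i => π < X i ω)).min' h) ω
            else 0) ∂μ := by
  classical
  set M : Ω → ℝ := fun ω => Finset.univ.sup' Finset.univ_nonempty (fun i => X i ω) with hMdef
  set A : Fin n → Set Ω := fun i => {ω | π < X i ω ∧ ∀ j, j < i → X j ω ≤ π} with hAdef
  set B : Fin n → Set Ω := fun i => {ω | ∀ j, j < i → X j ω ≤ π} with hBdef
  set Y : Fin n → Ω → ℝ := fun i ω => max (X i ω - π) 0 with hYdef
  have hXiM : ∀ i ω, X i ω ≤ M ω := by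
    intro i ω
    show X i ω ≤ Finset.univ.sup' Finset.univ_nonempty (fun i => X i ω)
    exact Finset.le_sup' (fun j => X j ω) (Finset.mem_univ i)
  have hM0 : ∀ ω, 0 ≤ M ω := by
    intro ω
    exact le_trans (hX0 0 ω) (hXiM 0 ω)
  have hXi_int : ∀ i, Integrable (X i) μ := by
    intro i
    refine hXint.mono ((hXm i).aestronglyMeasurable) (ae_of_all _ fun ω => ?_)
    simp only [Real.norm_eq_abs]
    rw [abs_of_nonneg (hX0 i ω), abs_of_nonneg (hM0 ω)]
    exact hXiM i ω
  have hY_int : ∀ i, Integrable (Y i) μ := by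
    intro i
    have h := ((hXi_int i).sub (integrable_const π)).pos_part
    simpa using h
  have hAm : ∀ i, MeasurableSet (A i) := by
    intro i
    have hEq : A i = {ω | π < X i ω} ∩ ⋂ (j : Fin n), ⋂ (_ : j < i), {ω | X j ω ≤ π} := by
      ext ω; simp [hAdef]
    rw [hEq]
    exact (measurableSet_lt measurable_const (hXm i)).inter
      (MeasurableSet.iInter fun j => MeasurableSet.iInter fun _ =>
        measurableSet_le (hXm j) measurable_const)
  have hBm : ∀ i, MeasurableSet (B i) := by
    intro i
    have hEq : B i = ⋂ (j : Fin n), ⋂ (_ : j < i), {ω | X j ω ≤ π} := by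
      ext ω; simp [hBdef]
    rw [hEq]
    exact MeasurableSet.iInter fun j => MeasurableSet.iInter fun _ =>
      measurableSet_le (hXm j) measurable_const
  -- the first exceeder lies in its own `A`
  have hfirst : ∀ ω (h : (Finset.univ.filter (fun i => π < X i ω)).Nonempty),
      ω ∈ A ((Finset.univ.filter (fun i => π < X i ω)).min' h) := by
    intro ω h
    have h1 : (Finset.univ.filter (fun i => π < X i ω)).min' h
        ∈ Finset.univ.filter (fun i => π < X i ω) := Finset.min'_mem _ h
    have h2 : π < X ((Finset.univ.filter (fun i => π < X i ω)).min' h) ω :=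
      (Finset.mem_filter.mp h1).2
    refine (show _ ∧ _ from ⟨h2, fun j hj => ?_⟩)
    by_contra hc
    push_neg at hc
    have hmem : j ∈ Finset.univ.filter (fun i => π < X i ω) :=
      Finset.mem_filter.mpr ⟨Finset.mem_univ j, hc⟩
    exact absurd (Finset.min'_le _ j hmem) (not_le.mpr hj)
  -- pointwise decomposition of Z
  have hZ_eq : ∀ ω, (if h : (Finset.univ.filter (fun i => π < X i ω)).Nonempty
        then X ((Finset.univ.filter (fun i => π < X i ω)).min' h) ω else 0)
        = ∑ i, (A i).indicator (X i) ω := by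
    intro ω
    by_cases h : (Finset.univ.filter (fun i => π < X i ω)).Nonempty
    · rw [dif_pos h]
      set i0 := (Finset.univ.filter (fun i => π < X i ω)).min' h with hi0
      have hA0 : ω ∈ A i0 := hfirst ω h
      have h0 : ∀ j ∈ Finset.univ, j ≠ i0 → (A j).indicator (X j) ω = 0 := by
        intro j _ hj
        have hnot : ω ∉ A j := by
          intro hAj
          obtain ⟨hjπ, hjlt⟩ := (hAj : π < X j ω ∧ ∀ k, k < j → X k ω ≤ π)
          have hjmem : j ∈ Finset.univ.filter (fun k => π < X k ω) :=
            Finset.mem_filter.mpr ⟨Finset.mem_univ _, hjπ⟩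
          have hle : i0 ≤ j := Finset.min'_le _ j hjmem
          rcases lt_or_eq_of_le hle with hlt | heq
          · obtain ⟨hi0π, -⟩ := (hA0 : π < X i0 ω ∧ ∀ k, k < i0 → X k ω ≤ π)
            have := hjlt i0 hlt
            linarith
          · exact hj heq.symm
        exact Set.indicator_of_notMem hnot _
      rw [Finset.sum_eq_single_of_mem i0 (Finset.mem_univ i0) h0,
        Set.indicator_of_mem hA0]
    · rw [dif_neg h]
      symm
      refine Finset.sum_eq_zero fun i _ => ?_
      have hnot : ω ∉ A i := by
        intro hAi
        exact h ⟨i, Finset.mem_filter.mpr ⟨Finset.mem_univ i,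
          (hAi : π < X i ω ∧ ∀ k, k < i → X k ω ≤ π).1⟩⟩
      exact Set.indicator_of_notMem hnot _
  have hZ_int_eq : ∫ ω, (if h : (Finset.univ.filter (fun i => π < X i ω)).Nonempty
        then X ((Finset.univ.filter (fun i => π < X i ω)).min' h) ω else 0) ∂μ
        = ∑ i, ∫ ω, (A i).indicator (X i) ω ∂μ := by
    have hEq : (fun ω => (if h : (Finset.univ.filter (fun i => π < X i ω)).Nonempty
        then X ((Finset.univ.filter (fun i => π < X i ω)).min' h) ω else 0))
        = fun ω => ∑ i, (A i).indicator (X i) ω := funext hZ_eq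
    rw [hEq]
    exact integral_finset_sum _ fun i _ => (hXi_int i).indicator (hAm i)
  -- per-index decomposition
  have hAB : ∀ i ω, (A i).indicator (X i) ω
      = (A i).indicator (fun _ => π) ω + (B i).indicator (Y i) ω := by
    intro i ω
    by_cases hAc : ω ∈ A i
    · have hmem : π < X i ω ∧ ∀ k, k < i → X k ω ≤ π := hAc
      obtain ⟨h1, h2⟩ := hmem
      have hB' : ω ∈ B i := h2
      rw [Set.indicator_of_mem hAc, Set.indicator_of_mem hAc, Set.indicator_of_mem hB']
      show X i ω = π + max (X i ω - π) 0
      rw [max_eq_left (by linarith)]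
      ring
    · rw [Set.indicator_of_notMem hAc, Set.indicator_of_notMem hAc]
      by_cases hB' : ω ∈ B i
      · rw [Set.indicator_of_mem hB']
        have hBi : ∀ j, j < i → X j ω ≤ π := hB'
        have hnlt : ¬ π < X i ω := fun hc => hAc (show ω ∈ A i from ⟨hc, hBi⟩)
        show (0:ℝ) = 0 + max (X i ω - π) 0
        rw [max_eq_right (by linarith [not_lt.mp hnlt])]
        ring
      · rw [Set.indicator_of_notMem hB']
        ring
  have hint1 : ∀ i, ∫ ω, (A i).indicator (X i) ω ∂μ
      = π * (μ (A i)).toReal + ∫ ω, (B i).indicator (Y i) ω ∂μ := by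
    intro i
    have hEq : (fun ω => (A i).indicator (X i) ω)
        = fun ω => (A i).indicator (fun _ => π) ω + (B i).indicator (Y i) ω :=
      funext (hAB i)
    rw [hEq, integral_add ((integrable_const π).indicator (hAm i))
      ((hY_int i).indicator (hBm i))]
    congr 1
    rw [integral_indicator_const π (hAm i), smul_eq_mul, mul_comm]
    rfl
  -- independence step
  have hBint : ∀ i, ∫ ω, (B i).indicator (Y i) ω ∂μ
      = (μ (B i)).toReal * ∫ ω, Y i ω ∂μ := by
    intro i
    set S := Finset.univ.filter (fun j : Fin n => j < i) with hS
    have hdisj : Disjoint S ({i} : Finset (Fin n)) := by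
      simp [hS, Finset.disjoint_singleton_right]
    have hIndep := hindep.indepFun_finset S {i} hdisj hXm
    have hφm : Measurable (fun v : {x // x ∈ S} → ℝ =>
        if ∀ j : {x // x ∈ S}, v j ≤ π then (1:ℝ) else 0) := by
      refine Measurable.ite ?_ measurable_const measurable_const
      have hEq : {v : {x // x ∈ S} → ℝ | ∀ j : {x // x ∈ S}, v j ≤ π}
          = ⋂ j : {x // x ∈ S}, {v | v j ≤ π} := by
        ext v; simp
      rw [hEq]
      exact MeasurableSet.iInter fun j =>
        measurableSet_le (measurable_pi_apply j) measurable_const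
    have hψm : Measurable (fun v : {x // x ∈ ({i} : Finset (Fin n))} → ℝ =>
        max (v ⟨i, Finset.mem_singleton_self i⟩ - π) 0) :=
      ((measurable_pi_apply _).sub measurable_const).max measurable_const
    have hcomp := hIndep.comp hφm hψm
    have heq1 : ((fun v : {x // x ∈ S} → ℝ =>
          if ∀ j : {x // x ∈ S}, v j ≤ π then (1:ℝ) else 0)
          ∘ (fun a (j : {x // x ∈ S}) => X (↑j) a))
        = fun ω => (B i).indicator 1 ω := by
      funext ω
      show (if ∀ j : {x // x ∈ S}, X (↑j) ω ≤ π then (1:ℝ) else 0)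
          = (B i).indicator 1 ω
      have hiff : (∀ j : {x // x ∈ S}, X (↑j) ω ≤ π) ↔ ω ∈ B i := by
        constructor
        · intro h
          exact fun j hj => h ⟨j, Finset.mem_filter.mpr ⟨Finset.mem_univ j, hj⟩⟩
        · intro h j
          exact (h : ∀ k, k < i → X k ω ≤ π) (↑j) (Finset.mem_filter.mp j.2).2
      rw [Set.indicator_apply]
      by_cases hb : ω ∈ B i
      · rw [if_pos (hiff.mpr hb), if_pos hb]; rfl
      · rw [if_neg (fun hh => hb (hiff.mp hh)), if_neg hb]
    have heq2 : ((fun v : {x // x ∈ ({i} : Finset (Fin n))} → ℝ =>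
          max (v ⟨i, Finset.mem_singleton_self i⟩ - π) 0)
          ∘ (fun a (j : {x // x ∈ ({i} : Finset (Fin n))}) => X (↑j) a)) = Y i := by
      funext ω; rfl
    rw [heq1, heq2] at hcomp
    have hmul := ProbabilityTheory.IndepFun.integral_mul_eq_mul_integral hcomp
      ((integrable_const (1:ℝ)).indicator (hBm i)).aestronglyMeasurable (hY_int i).aestronglyMeasurable
    have hprod : ((fun ω => (B i).indicator 1 ω) * Y i)
        = fun ω => (B i).indicator (Y i) ω := by
      funext ω
      simp only [Pi.mul_apply, Set.indicator_apply]
      by_cases hb : ω ∈ B i <;> simp [hb]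
    rw [hprod] at hmul
    rw [hmul, integral_indicator_one (hBm i)]
    rfl
  -- measure computations
  have hAdisj' : ∀ i j, i < j → Disjoint (A i) (A j) := by
    intro i j hij
    rw [Set.disjoint_left]
    intro ω hi hj
    obtain ⟨hiπ, -⟩ := (hi : π < X i ω ∧ ∀ k, k < i → X k ω ≤ π)
    obtain ⟨-, hjlt⟩ := (hj : π < X j ω ∧ ∀ k, k < j → X k ω ≤ π)
    exact absurd hiπ (not_lt.mpr (hjlt i hij))
  have hAdisj : Pairwise (Function.onFun Disjoint A) := by
    intro i j hij
    rcases hij.lt_or_gt with h | h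
    · exact hAdisj' i j h
    · exact (hAdisj' j i h).symm
  have hAUnion : ⋃ i, A i = {ω | π < M ω} := by
    ext ω
    simp only [Set.mem_iUnion, Set.mem_setOf_eq]
    constructor
    · rintro ⟨i, hi⟩
      obtain ⟨hiπ, -⟩ := (hi : π < X i ω ∧ ∀ k, k < i → X k ω ≤ π)
      exact lt_of_lt_of_le hiπ (hXiM i ω)
    · intro h
      obtain ⟨i, -, hieq⟩ := Finset.exists_mem_eq_sup' Finset.univ_nonempty
        (fun i => X i ω)
      have hMX : M ω = X i ω := hieq
      have hne : (Finset.univ.filter (fun i => π < X i ω)).Nonempty :=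
        ⟨i, Finset.mem_filter.mpr ⟨Finset.mem_univ i, hMX ▸ h⟩⟩
      exact ⟨_, hfirst ω hne⟩
  have hμA : ∑ i, μ (A i) = 1/2 := by
    have h1 := measure_iUnion (μ := μ) hAdisj hAm
    rw [hAUnion, tsum_fintype] at h1
    rw [← h1]
    exact hmed2
  have hμA' : ∑ i, (μ (A i)).toReal = 1/2 := by
    rw [← ENNReal.toReal_sum (fun i _ => measure_ne_top μ _), hμA]
    simp [ENNReal.toReal_div]
  have hμB : ∀ i, (1/2 : ℝ) ≤ (μ (B i)).toReal := by
    intro i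
    have hsub : {ω | M ω ≤ π} ⊆ B i := by
      intro ω h
      exact fun j hj => le_trans (hXiM j ω) h
    have h12 : μ {ω | M ω ≤ π} = 1/2 := hmed1
    have hle := measure_mono (μ := μ) hsub
    rw [h12] at hle
    have := ENNReal.toReal_mono (measure_ne_top μ _) hle
    simpa using this
  have hYpos : ∀ i, 0 ≤ ∫ ω, Y i ω ∂μ :=
    fun i => integral_nonneg (fun ω => le_max_right _ _)
  have hmaxM_int : Integrable (fun ω => max (M ω - π) 0) μ := by
    have h := (hXint.sub (integrable_const π)).pos_part
    simpa using h
  have hsumY : ∫ ω, max (M ω - π) 0 ∂μ ≤ ∑ i, ∫ ω, Y i ω ∂μ := by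
    rw [← integral_finset_sum _ (fun i _ => hY_int i)]
    refine integral_mono hmaxM_int (integrable_finset_sum _ (fun i _ => hY_int i)) ?_
    intro ω
    obtain ⟨i, -, hieq⟩ := Finset.exists_mem_eq_sup' Finset.univ_nonempty
      (fun i => X i ω)
    have hMX : M ω = X i ω := hieq
    calc max (M ω - π) 0 = Y i ω := by rw [hMX]
      _ ≤ ∑ j, Y j ω := by
        exact Finset.single_le_sum (f := fun j => Y j ω)
          (fun j _ => le_max_right _ _) (Finset.mem_univ i)
  have hMle : ∫ ω, M ω ∂μ ≤ π + ∫ ω, max (M ω - π) 0 ∂μ := by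
    have hadd : ∫ ω, (π + max (M ω - π) 0) ∂μ = π + ∫ ω, max (M ω - π) 0 ∂μ := by
      rw [integral_add (integrable_const π) hmaxM_int, integral_const]
      simp
    rw [← hadd]
    refine integral_mono hXint ((integrable_const π).add hmaxM_int) ?_
    intro ω
    show M ω ≤ π + max (M ω - π) 0
    have := le_max_left (M ω - π) 0
    linarith
  refine le_trans ?_ hZ_int_eq.symm.le
  calc (1/2) * ∫ ω, M ω ∂μ
      ≤ (1/2) * (π + ∫ ω, max (M ω - π) 0 ∂μ) :=
        mul_le_mul_of_nonneg_left hMle (by norm_num)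
    _ = π * (1/2) + (1/2) * ∫ ω, max (M ω - π) 0 ∂μ := by ring
    _ ≤ π * (1/2) + (1/2) * ∑ i, ∫ ω, Y i ω ∂μ := by
        have h := hsumY
        nlinarith
    _ = π * ∑ i, (μ (A i)).toReal + ∑ i, (1/2) * ∫ ω, Y i ω ∂μ := by
        rw [hμA', Finset.mul_sum]
    _ ≤ π * ∑ i, (μ (A i)).toReal + ∑ i, (μ (B i)).toReal * ∫ ω, Y i ω ∂μ := by
        refine add_le_add_right (Finset.sum_le_sum fun i _ => ?_) _
        exact mul_le_mul_of_nonneg_right (hμB i) (hYpos i)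
    _ = ∑ i, (π * (μ (A i)).toReal + (μ (B i)).toReal * ∫ ω, Y i ω ∂μ) := by
        rw [Finset.sum_add_distrib, Finset.mul_sum]
    _ = ∑ i, ∫ ω, (A i).indicator (X i) ω ∂μ := by
        refine Finset.sum_congr rfl fun i _ => ?_
        rw [hint1 i, hBint i]
end

section
/- Let κ ≥ 0 and p ≥ 0 be reals, and let r be a random variable on [e^{-1}, 1] with density f(r) = 1/r. Suppose a bidder wins and earns r·κ whenever r < 1 - p/κ (and earns 0 otherwise), and set this contribution to 0 if p ≥ (1 - e^{-1})κ. Then E[r·κ·1{r < 1 - p/κ}] + p ≥ (1 - 1/e)·κ. -/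
open Classical in
/-- Dutch auction smoothness: with `r` drawn from `[e⁻¹, 1]` with density `1/r`, a bidder
earning `r·κ` whenever `r < 1 - p/κ` (contribution set to `0` if `p ≥ (1 - e⁻¹)κ`)
guarantees `E[r·κ·1{r < 1 - p/κ}] + p ≥ (1 - 1/e)·κ`. -/
theorem dutch_smoothness (κ p : ℝ) (hκ : 0 ≤ κ) (hp : 0 ≤ p) :
    (1 - Real.exp (-1)) * κ ≤
      (if (1 - Real.exp (-1)) * κ ≤ p then 0
       else ∫ r in Set.Icc (Real.exp (-1)) 1,
         (if r < 1 - p / κ then r * κ else 0) * (1 / r)) + p := by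
  split_ifs with h
  · linarith
  push_neg at h
  set a := Real.exp (-1) with ha_def
  have ha : 0 < a := Real.exp_pos _
  have ha1 : a < 1 := by
    rw [ha_def, Real.exp_lt_one_iff]; norm_num
  have hκ0 : 0 < κ := by nlinarith
  set c := 1 - p / κ with hc_def
  have hac : a ≤ c := by
    rw [hc_def]
    have : p / κ ≤ 1 - a := by
      rw [div_le_iff₀ hκ0]; nlinarith
    linarith
  have hc1 : c ≤ 1 := by
    have : 0 ≤ p / κ := div_nonneg hp hκ0.le
    rw [hc_def]; linarith
  have hint : ∫ r in Set.Icc a 1, (if r < c then r * κ else 0) * (1 / r)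
      = κ * (c - a) := by
    rw [MeasureTheory.setIntegral_congr_fun measurableSet_Icc
      (g := fun r => Set.indicator (Set.Iio c) (fun _ => κ) r) ?_]
    · rw [MeasureTheory.setIntegral_indicator measurableSet_Iio]
      have hset : Set.Icc a 1 ∩ Set.Iio c = Set.Ico a c := by
        ext x
        simp only [Set.mem_inter_iff, Set.mem_Icc, Set.mem_Iio, Set.mem_Ico]
        constructor
        · rintro ⟨⟨h1, _⟩, h3⟩; exact ⟨h1, h3⟩
        · rintro ⟨h1, h3⟩; exact ⟨⟨h1, le_trans h3.le hc1⟩, h3⟩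
      rw [hset, MeasureTheory.setIntegral_const, Real.volume_real_Ico_of_le hac,
        smul_eq_mul]
      rw [hc_def]
      field_simp
    · intro r hr
      have hr0 : 0 < r := lt_of_lt_of_le ha hr.1
      by_cases hrc : r < c
      · simp only [Set.indicator, Set.mem_Iio, hrc, if_pos]
        field_simp
      · simp [Set.indicator, hrc]
  rw [hint]
  have hcalc : κ * (c - a) = κ - p - a * κ := by
    rw [hc_def]; field_simp
  rw [hcalc]; linarith
end

section
/- Let κ ≥ 0 and p ≥ 0 be reals and α ∈ (0, 1]. Let r be a random variable on [e^{-α}, 1] with density f(r) = 1/(α·r). Then α·E[r·κ·1{(1-r)κ > p}] + p ≥ (1 - e^{-α})·κ. -/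
open Classical in
/-- α-smoothness for the Dutch auction: with `r` drawn from `[e^{-α}, 1]` with density
`1/(α·r)`, we have `α·E[r·κ·1{(1-r)κ > p}] + p ≥ (1 - e^{-α})·κ`. -/
theorem dutch_smoothness_alpha (κ p α : ℝ) (hκ : 0 ≤ κ) (hp : 0 ≤ p)
    (hα0 : 0 < α) (hα1 : α ≤ 1) :
    (1 - Real.exp (-α)) * κ ≤
      α * (∫ r in Set.Icc (Real.exp (-α)) 1,
            (if p < (1 - r) * κ then r * κ else 0) * (1 / (α * r))) + p := by
  set e := Real.exp (-α) with he
  have he0 : 0 < e := Real.exp_pos _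
  by_cases hcase : (1 - e) * κ ≤ p
  · -- integral is nonnegative
    have hint : 0 ≤ ∫ r in Set.Icc e 1,
        (if p < (1 - r) * κ then r * κ else 0) * (1 / (α * r)) := by
      apply MeasureTheory.setIntegral_nonneg measurableSet_Icc
      intro r hr
      have hr0 : 0 < r := lt_of_lt_of_le he0 hr.1
      apply mul_nonneg
      · split
        · exact mul_nonneg hr0.le hκ
        · exact le_refl 0
      · positivity
    nlinarith [mul_nonneg hα0.le hint]
  · push_neg at hcase
    have hκ0 : 0 < κ := by
      by_contra h
      push_neg at h
      have : κ = 0 := le_antisymm h hκ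
      rw [this] at hcase
      simp at hcase
      linarith
    set c := 1 - p / κ with hc
    have hec : e < c := by
      have : p / κ < 1 - e := (div_lt_iff₀ hκ0).mpr (by linarith)
      rw [hc]; linarith
    have hc1 : c ≤ 1 := by
      rw [hc]; have : 0 ≤ p / κ := div_nonneg hp hκ0.le; linarith
    have hcongr : ∀ r ∈ Set.Icc e 1,
        (if p < (1 - r) * κ then r * κ else 0) * (1 / (α * r))
          = (Set.Iio c).indicator (fun _ => κ / α) r := by
      intro r hr
      have hr0 : 0 < r := lt_of_lt_of_le he0 hr.1
      have hiff : p < (1 - r) * κ ↔ r < c := by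
        rw [hc]
        constructor
        · intro h
          have : p / κ < 1 - r := (div_lt_iff₀ hκ0).mpr (by linarith)
          linarith
        · intro h
          have h2 : p / κ < 1 - r := by linarith
          have := (div_lt_iff₀ hκ0).mp h2
          linarith
      by_cases h : r < c
      · rw [Set.indicator_of_mem (Set.mem_Iio.mpr h)]
        rw [if_pos (hiff.mpr h)]
        field_simp
      · rw [Set.indicator_of_notMem (by simpa using h)]
        rw [if_neg (fun hh => h (hiff.mp hh))]
        simp
    rw [MeasureTheory.setIntegral_congr_fun measurableSet_Icc hcongr]
    rw [MeasureTheory.setIntegral_indicator measurableSet_Iio]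
    have hseteq : Set.Icc e 1 ∩ Set.Iio c = Set.Ico e c := by
      ext r
      simp only [Set.mem_inter_iff, Set.mem_Icc, Set.mem_Iio, Set.mem_Ico]
      constructor
      · rintro ⟨⟨h1, h2⟩, h3⟩; exact ⟨h1, h3⟩
      · rintro ⟨h1, h2⟩; exact ⟨⟨h1, by linarith⟩, h2⟩
    rw [hseteq]
    rw [MeasureTheory.setIntegral_const, Real.volume_real_Ico, smul_eq_mul]
    rw [max_eq_left (by linarith)]
    have hκc : κ * c = κ - p := by
      rw [hc, mul_sub, mul_one, mul_div_cancel₀ _ hκ0.ne']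
    have : α * ((c - e) * (κ / α)) = (c - e) * κ := by
      field_simp
    rw [this]
    nlinarith
end

section
/- Let κ_{ij} ≥ 0, and let p_i, p^j ≥ 0 with p = max{p_i, p^j}. Let r be a random variable on [e^{-2}, 1] with density f(r) = 1/(2r). Suppose a quantity X(r) satisfies X(r) ≥ r·κ_{ij} whenever r < 1 - p/κ_{ij}, and X(r) ≥ 0 always. Then E[X(r)] + (1/2)p_i + (1/2)p^j ≥ (1/2)(1 - e^{-2})·κ_{ij}. -/
open MeasureTheory

/-- Multi-item smoothness inequality (Lemma 4): with `r` drawn from `[e⁻², 1]` with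
density `1/(2r)`, if `X r ≥ r·κ` whenever `r < 1 - max{p_i, p^j}/κ` and `X ≥ 0` always,
then `E[X(r)] + (1/2)p_i + (1/2)p^j ≥ (1/2)(1 - e⁻²)·κ`. -/
theorem multi_item_smoothness (κ pi pj : ℝ) (hκ : 0 ≤ κ) (hpi : 0 ≤ pi) (hpj : 0 ≤ pj)
    (X : ℝ → ℝ)
    (hX0 : ∀ r ∈ Set.Icc (Real.exp (-2)) 1, 0 ≤ X r)
    (hXr : ∀ r ∈ Set.Icc (Real.exp (-2)) 1, r < 1 - max pi pj / κ → r * κ ≤ X r)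
    (hXint : IntegrableOn (fun r => X r * (1 / (2 * r))) (Set.Icc (Real.exp (-2)) 1)) :
    (1/2) * (1 - Real.exp (-2)) * κ ≤
      (∫ r in Set.Icc (Real.exp (-2)) 1, X r * (1 / (2 * r))) +
        (1/2) * pi + (1/2) * pj := by
  set a := Real.exp (-2) with ha
  have ha0 : 0 < a := Real.exp_pos _
  have ha1 : a < 1 := by
    rw [ha]; exact Real.exp_lt_one_iff.mpr (by norm_num)
  have hpos : ∀ r ∈ Set.Icc a 1, 0 ≤ X r * (1 / (2 * r)) := by
    intro r hr
    have hr0 : 0 < r := lt_of_lt_of_le ha0 hr.1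
    exact mul_nonneg (hX0 r hr) (by positivity)
  have hInonneg : 0 ≤ ∫ r in Set.Icc a 1, X r * (1 / (2 * r)) :=
    setIntegral_nonneg measurableSet_Icc hpos
  rcases eq_or_lt_of_le hκ with hκ0 | hκ0
  · rw [← hκ0]; simp only [mul_zero]; linarith
  set p := max pi pj with hp
  have hp0 : 0 ≤ p := le_trans hpi (le_max_left _ _)
  have hpsum : p ≤ pi + pj := by
    rcases max_cases pi pj with ⟨h1, _⟩ | ⟨h1, _⟩ <;> rw [hp, h1] <;> linarith
  by_cases hc : 1 - p / κ ≤ a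
  · -- p/κ large: prices already cover
    have : (1 - a) * κ ≤ p := by
      have h1 : 1 - a ≤ p / κ := by linarith
      calc (1 - a) * κ ≤ (p / κ) * κ := by
            apply mul_le_mul_of_nonneg_right h1 hκ
        _ = p := by field_simp
    linarith
  · push_neg at hc
    set c := 1 - p / κ with hcdef
    have hc1 : c ≤ 1 := by
      rw [hcdef]
      have h0 : 0 ≤ p / κ := div_nonneg hp0 hκ
      linarith
    set g : ℝ → ℝ := (Set.Iio c).indicator (fun _ => κ / 2) with hg
    have hgint : IntegrableOn g (Set.Icc a 1) := by
      apply Integrable.indicator _ measurableSet_Iio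
      exact integrableOn_const (by simp)
    have hmono : ∀ r ∈ Set.Icc a 1, g r ≤ X r * (1 / (2 * r)) := by
      intro r hr
      have hr0 : 0 < r := lt_of_lt_of_le ha0 hr.1
      by_cases hrc : r < c
      · have h1 : r * κ ≤ X r := hXr r hr hrc
        have : g r = κ / 2 := by rw [hg]; simp [Set.indicator_of_mem, hrc]
        rw [this]
        have h2 : r * κ * (1 / (2 * r)) = κ / 2 := by field_simp
        calc κ / 2 = r * κ * (1 / (2 * r)) := h2.symm
          _ ≤ X r * (1 / (2 * r)) := by
              apply mul_le_mul_of_nonneg_right h1 (by positivity)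
      · have : g r = 0 := by rw [hg]; simp [Set.indicator_of_notMem, hrc]
        rw [this]; exact hpos r hr
    have hIg : ∫ r in Set.Icc a 1, g r = (c - a) * (κ / 2) := by
      rw [hg, setIntegral_indicator measurableSet_Iio]
      have hset : Set.Icc a 1 ∩ Set.Iio c = Set.Ico a c := by
        ext x
        simp only [Set.mem_inter_iff, Set.mem_Icc, Set.mem_Iio, Set.mem_Ico]
        constructor
        · rintro ⟨⟨h1, _⟩, h3⟩; exact ⟨h1, h3⟩
        · rintro ⟨h1, h2⟩; exact ⟨⟨h1, le_trans (le_of_lt h2) hc1⟩, h2⟩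
      rw [hset, setIntegral_const, Real.volume_real_Ico_of_le (by linarith),
        smul_eq_mul]
    have hle : ∫ r in Set.Icc a 1, g r ≤ ∫ r in Set.Icc a 1, X r * (1 / (2 * r)) :=
      setIntegral_mono_on hgint hXint measurableSet_Icc hmono
    have hkey : (c - a) * (κ / 2) = (1/2) * (1 - a) * κ - p / 2 := by
      rw [hcdef]; field_simp; ring
    linarith [hle, hIg ▸ hle]
end

section
/- Let D be a set of real-valued integrable functions on a probability space closed under the following property: for any σ_1, ..., σ_n ∈ D, their pointwise minimum min_i σ_i also belongs to D (as in the set DI^k of inspection-discouraging functions). Then for any measurable φ with values in a bounded interval [0, M], inf{E[φ·σ] : σ ∈ D} = E[φ·σ*], where σ* is the Radon–Nikodym density satisfying ∫_U σ* dμ = inf{∫_U σ dμ : σ ∈ D} for all measurable U, provided D is nonempty and the set-function U ↦ inf{∫_U σ dμ : σ ∈ D} is a countably additive signed measure absolutely continuous with respect to μ. -/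
open MeasureTheory

private lemma le_of_forall_pos_le_add' {a b : ℝ} (h : ∀ ε > (0:ℝ), a ≤ b + ε) : a ≤ b := by
  by_contra hab
  push_neg at hab
  have := h ((a - b) / 2) (by linarith)
  linarith

private lemma frac_lt_half {ε Q : ℝ} (hε : 0 < ε) (hQ : 0 ≤ Q) :
    Q * (ε / (2 * (Q + 1))) < ε / 2 := by
  have h1 : Q * (ε / (2 * (Q + 1))) = Q * ε / (2 * (Q + 1)) := by ring
  rw [h1, div_lt_div_iff₀ (by positivity) (by norm_num : (0:ℝ) < 2)]
  nlinarith

set_option maxHeartbeats 2000000 in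
/-- Extension of the defining property of the essential infimum density: if `D` is a
nonempty family of integrable functions closed under pointwise minima, and `σ*` is the
Radon–Nikodym density satisfying `∫_U σ* = inf{∫_U σ : σ ∈ D}` for all measurable `U`,
then for any measurable weight `φ` with values in `[0, M]`,
`∫ φ·σ* = inf{∫ φ·σ : σ ∈ D}`. -/
theorem essential_inf_extension
    {Ω : Type*} [MeasurableSpace Ω] (μ : Measure Ω) [IsProbabilityMeasure μ]
    (D : Set (Ω → ℝ)) (hD : D.Nonempty)
    (hDint : ∀ σ ∈ D, Integrable σ μ)
    (hDmin : ∀ σ₁ ∈ D, ∀ σ₂ ∈ D, (fun ω => min (σ₁ ω) (σ₂ ω)) ∈ D)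
    (σs : Ω → ℝ) (hσs : Integrable σs μ)
    (hRN : ∀ U : Set Ω, MeasurableSet U →
      (∫ ω in U, σs ω ∂μ) = sInf ((fun σ : Ω → ℝ => ∫ ω in U, σ ω ∂μ) '' D))
    (M : ℝ) (φ : Ω → ℝ) (hφ : Measurable φ)
    (hφ0 : ∀ ω, 0 ≤ φ ω) (hφM : ∀ ω, φ ω ≤ M) :
    (∫ ω, φ ω * σs ω ∂μ) = sInf ((fun σ : Ω → ℝ => ∫ ω, φ ω * σ ω ∂μ) '' D) := by
  classical
  -- trivial case M ≤ 0
  rcases le_or_gt M 0 with hM | hM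
  · have hφz : ∀ ω, φ ω = 0 := fun ω => le_antisymm ((hφM ω).trans hM) (hφ0 ω)
    have h1 : (fun σ : Ω → ℝ => ∫ ω, φ ω * σ ω ∂μ) = fun _ => (0:ℝ) := by
      funext σ; simp [hφz]
    rw [h1, Set.Nonempty.image_const hD, csInf_singleton]
    simp [hφz]
  -- integrability facts
  have hφb : ∃ C, ∀ ω, ‖φ ω‖ ≤ C := ⟨M, fun ω => by
    rw [Real.norm_eq_abs, abs_of_nonneg (hφ0 ω)]; exact hφM ω⟩
  have hint : ∀ σ ∈ D, Integrable (fun ω => φ ω * σ ω) μ := fun σ hσ =>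
    (hDint σ hσ).bdd_mul hφ.aestronglyMeasurable (Filter.Eventually.of_forall hφb.choose_spec)
  have hintφs : Integrable (fun ω => φ ω * σs ω) μ :=
    hσs.bdd_mul hφ.aestronglyMeasurable (Filter.Eventually.of_forall hφb.choose_spec)
  obtain ⟨σ₀, hσ₀D⟩ := id hD
  have hσ₀int : Integrable σ₀ μ := hDint σ₀ hσ₀D
  have hRNuniv : (∫ ω, σs ω ∂μ) = sInf ((fun σ : Ω → ℝ => ∫ ω, σ ω ∂μ) '' D) := by
    have h := hRN Set.univ MeasurableSet.univ
    simpa using h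
  -- pointwise bound helpers
  have hgen : ∀ (τ : Ω → ℝ) (ω : Ω), φ ω * τ ω ≤ M * max (τ ω) 0 := by
    intro τ ω
    rcases le_or_gt 0 (τ ω) with h | h
    · rw [max_eq_left h]; exact mul_le_mul_of_nonneg_right (hφM ω) h
    · rw [max_eq_right h.le]
      nlinarith [mul_nonneg (hφ0 ω) (neg_nonneg.2 h.le)]
  have hδgen : ∀ (δ' : ℝ), 0 ≤ δ' → ∀ (τ : Ω → ℝ) (ω : Ω), δ' ≤ φ ω →
      φ ω * τ ω ≤ δ' * τ ω + M * max (τ ω) 0 := by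
    intro δ' hδ' τ ω hδφ
    rcases le_or_gt 0 (τ ω) with h | h
    · rw [max_eq_left h]
      have h1 : φ ω * τ ω ≤ M * τ ω := mul_le_mul_of_nonneg_right (hφM ω) h
      have h2 : 0 ≤ δ' * τ ω := mul_nonneg hδ' h
      linarith
    · rw [max_eq_right h.le]
      have h1 : φ ω * τ ω ≤ δ' * τ ω := mul_le_mul_of_nonpos_right hδφ h.le
      linarith
  have hgrid : ∀ (a δ' : ℝ), 0 ≤ a → ∀ (τ : Ω → ℝ) (ω : Ω),
      a ≤ φ ω → φ ω < a + δ' → φ ω * τ ω ≤ a * τ ω + δ' * max (τ ω) 0 := by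
    intro a δ' ha τ ω h1 h2
    rcases le_or_gt 0 (τ ω) with h | h
    · rw [max_eq_left h]
      have h3 : φ ω * τ ω ≤ (a + δ') * τ ω := mul_le_mul_of_nonneg_right h2.le h
      nlinarith
    · rw [max_eq_right h.le]
      have h3 : φ ω * τ ω ≤ a * τ ω := mul_le_mul_of_nonpos_right h1 h.le
      linarith
  by_cases hB : BddBelow ((fun σ : Ω → ℝ => ∫ ω, σ ω ∂μ) '' D)
  · -- CASE 1 : the total integrals are bounded below
    obtain ⟨B, hBlb⟩ := hB
    have hnlb : ∀ U : Set Ω, MeasurableSet U → ∀ σ ∈ D,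
        B - ∫ ω, |σ₀ ω| ∂μ ≤ ∫ ω in U, σ ω ∂μ := by
      intro U hU σ hσ
      set τ : Ω → ℝ := fun ω => min (σ ω) (σ₀ ω) with hτdef
      have hτD : τ ∈ D := hDmin σ hσ σ₀ hσ₀D
      have hτint : Integrable τ μ := (hDint σ hσ).inf hσ₀int
      have h1 : (∫ ω in U, τ ω ∂μ) ≤ ∫ ω in U, σ ω ∂μ :=
        setIntegral_mono hτint.integrableOn ((hDint σ hσ).integrableOn)
          fun ω => min_le_left _ _
      have h2 : (∫ ω in U, τ ω ∂μ) + (∫ ω in Uᶜ, τ ω ∂μ) = ∫ ω, τ ω ∂μ :=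
        integral_add_compl hU hτint
      have h3 : B ≤ ∫ ω, τ ω ∂μ := hBlb ⟨τ, hτD, rfl⟩
      have h5 : (∫ ω in Uᶜ, τ ω ∂μ) ≤ ∫ ω in Uᶜ, |σ₀ ω| ∂μ :=
        setIntegral_mono hτint.integrableOn (hσ₀int.abs.integrableOn)
          fun ω => (min_le_right _ _).trans (le_abs_self _)
      have h6 : (∫ ω in Uᶜ, |σ₀ ω| ∂μ) ≤ ∫ ω, |σ₀ ω| ∂μ :=
        setIntegral_le_integral hσ₀int.abs
          (Filter.Eventually.of_forall fun ω => abs_nonneg _)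
      linarith
    have hbbU : ∀ U : Set Ω, MeasurableSet U →
        BddBelow ((fun σ : Ω → ℝ => ∫ ω in U, σ ω ∂μ) '' D) := fun U hU =>
      ⟨B - ∫ ω, |σ₀ ω| ∂μ, by rintro x ⟨σ, hσ, rfl⟩; exact hnlb U hU σ hσ⟩
    have hles : ∀ σ ∈ D, σs ≤ᵐ[μ] σ := by
      intro σ hσ
      refine ae_le_of_forall_setIntegral_le hσs (hDint σ hσ) fun U hU _ => ?_
      rw [hRN U hU]
      exact csInf_le (hbbU U hU) ⟨σ, hσ, rfl⟩
    have hlb : ∀ σ ∈ D, (∫ ω, φ ω * σs ω ∂μ) ≤ ∫ ω, φ ω * σ ω ∂μ := by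
      intro σ hσ
      refine integral_mono_ae hintφs (hint σ hσ) ?_
      filter_upwards [hles σ hσ] with ω h
      exact mul_le_mul_of_nonneg_left h (hφ0 ω)
    have hbbφ : BddBelow ((fun σ : Ω → ℝ => ∫ ω, φ ω * σ ω ∂μ) '' D) :=
      ⟨∫ ω, φ ω * σs ω ∂μ, by rintro x ⟨σ, hσ, rfl⟩; exact hlb σ hσ⟩
    refine le_antisymm (le_csInf (hD.image _) ?_) ?_
    · rintro x ⟨σ, hσ, rfl⟩; exact hlb σ hσ
    · refine le_of_forall_pos_le_add' fun ε hε => ?_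
      have hε' : 0 < ε / (M + 1) := by positivity
      have hlt : sInf ((fun σ : Ω → ℝ => ∫ ω, σ ω ∂μ) '' D)
          < (∫ ω, σs ω ∂μ) + ε / (M + 1) := by rw [← hRNuniv]; linarith
      obtain ⟨x, hx, hxlt⟩ := exists_lt_of_csInf_lt (hD.image _) hlt
      obtain ⟨σ₁, hσ₁, rfl⟩ := hx
      have hx1 : (∫ ω, σ₁ ω ∂μ) < (∫ ω, σs ω ∂μ) + ε / (M + 1) := hxlt
      have hmono : (∫ ω, φ ω * σ₁ ω ∂μ) - (∫ ω, φ ω * σs ω ∂μ)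
          ≤ M * ((∫ ω, σ₁ ω ∂μ) - ∫ ω, σs ω ∂μ) := by
        have h7 : (∫ ω, (φ ω * σ₁ ω - φ ω * σs ω) ∂μ)
            ≤ ∫ ω, M * (σ₁ ω - σs ω) ∂μ := by
          refine integral_mono_ae ((hint σ₁ hσ₁).sub hintφs)
            (((hDint σ₁ hσ₁).sub hσs).const_mul M) ?_
          filter_upwards [hles σ₁ hσ₁] with ω h
          have h8 := mul_le_mul_of_nonneg_right (hφM ω) (sub_nonneg.2 h)
          nlinarith
        rw [integral_sub (hint σ₁ hσ₁) hintφs, integral_const_mul,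
          integral_sub (hDint σ₁ hσ₁) hσs] at h7
        exact h7
      have hfin : sInf ((fun σ : Ω → ℝ => ∫ ω, φ ω * σ ω ∂μ) '' D)
          ≤ ∫ ω, φ ω * σ₁ ω ∂μ := csInf_le hbbφ ⟨σ₁, hσ₁, rfl⟩
      have hM1 : M * (ε / (M + 1)) ≤ ε := by
        have h8 : ε / (M + 1) * (M + 1) = ε := div_mul_cancel₀ ε (by positivity)
        nlinarith [hε'.le]
      have h9 : M * ((∫ ω, σ₁ ω ∂μ) - ∫ ω, σs ω ∂μ) ≤ M * (ε / (M + 1)) :=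
        mul_le_mul_of_nonneg_left (by linarith) hM.le
      linarith
  · -- CASE 2 : the total integrals are unbounded below
    have hsu : (∫ ω, σs ω ∂μ) = 0 := by
      rw [hRNuniv, Real.sInf_of_not_bddBelow hB]
    have hIσs : ∀ U : Set Ω, MeasurableSet U → (∫ ω in U, σs ω ∂μ) = 0 := by
      intro U hU
      by_cases h : BddBelow ((fun σ : Ω → ℝ => ∫ ω in U, σ ω ∂μ) '' D)
      · obtain ⟨b, hb⟩ := h
        have hnb : ¬ BddBelow ((fun σ : Ω → ℝ => ∫ ω in Uᶜ, σ ω ∂μ) '' D) := by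
          rintro ⟨c, hc⟩
          apply hB
          refine ⟨b + c, ?_⟩
          rintro x ⟨σ, hσ, rfl⟩
          have h2 : (∫ ω in U, σ ω ∂μ) + (∫ ω in Uᶜ, σ ω ∂μ) = ∫ ω, σ ω ∂μ :=
            integral_add_compl hU (hDint σ hσ)
          have h3 : b ≤ ∫ ω in U, σ ω ∂μ := hb ⟨σ, hσ, rfl⟩
          have h4 : c ≤ ∫ ω in Uᶜ, σ ω ∂μ := hc ⟨σ, hσ, rfl⟩
          show b + c ≤ ∫ ω, σ ω ∂μ
          linarith
        have h5 : (∫ ω in Uᶜ, σs ω ∂μ) = 0 := by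
          rw [hRN Uᶜ hU.compl, Real.sInf_of_not_bddBelow hnb]
        have h6 : (∫ ω in U, σs ω ∂μ) + (∫ ω in Uᶜ, σs ω ∂μ) = ∫ ω, σs ω ∂μ :=
          integral_add_compl hU hσs
        linarith
      · rw [hRN U hU, Real.sInf_of_not_bddBelow h]
    have hσs0 : σs =ᵐ[μ] 0 :=
      ae_eq_zero_of_forall_setIntegral_eq_of_sigmaFinite
        (fun s _ _ => hσs.integrableOn) (fun s hs _ => hIσs s hs)
    have hLHS : (∫ ω, φ ω * σs ω ∂μ) = 0 := by
      have h0 : (fun ω => φ ω * σs ω) =ᵐ[μ] (fun _ => (0:ℝ)) := by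
        filter_upwards [hσs0] with ω h
        simp only [Pi.zero_apply] at h
        simp [h]
      rw [integral_congr_ae h0]
      simp
    have hsmall : ∀ U : Set Ω, MeasurableSet U → ∀ ε : ℝ, 0 < ε →
        ∃ σ ∈ D, (∫ ω in U, σ ω ∂μ) < ε := by
      intro U hU ε hε
      have hlt : sInf ((fun σ : Ω → ℝ => ∫ ω in U, σ ω ∂μ) '' D) < ε := by
        rw [← hRN U hU, hIσs U hU]; exact hε
      obtain ⟨x, hx, hxlt⟩ := exists_lt_of_csInf_lt (hD.image _) hlt
      obtain ⟨σ, hσ, rfl⟩ := hx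
      exact ⟨σ, hσ, hxlt⟩
    -- If bounded below, all weighted integrals are nonnegative
    have hnn : BddBelow ((fun σ : Ω → ℝ => ∫ ω, φ ω * σ ω ∂μ) '' D) →
        ∀ σ₁ ∈ D, 0 ≤ ∫ ω, φ ω * σ₁ ω ∂μ := by
      intro hbdd σ₁ hσ₁
      by_contra hneg
      push_neg at hneg
      obtain ⟨b, hb⟩ := hbdd
      have hσ₁int : Integrable σ₁ μ := hDint σ₁ hσ₁
      set c : ℝ := -(∫ ω, φ ω * σ₁ ω ∂μ) with hc
      have hc0 : 0 < c := by rw [hc]; linarith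
      set C : ℝ := ∫ ω, |σ₁ ω| ∂μ with hCdef
      have hC0 : 0 ≤ C := integral_nonneg fun ω => abs_nonneg _
      set δ : ℝ := c / (2 * (C + 1)) with hδdef
      have hδ0 : 0 < δ := div_pos hc0 (by linarith)
      have hδC : δ * C ≤ c / 2 := by
        have := frac_lt_half hc0 hC0
        rw [hδdef]
        nlinarith
      have hg := hσ₁int.1.aemeasurable
      set g : Ω → ℝ := hg.mk σ₁ with hgdef
      have hgm : Measurable g := hg.measurable_mk
      have hgeq : σ₁ =ᵐ[μ] g := hg.ae_eq_mk
      set U : Set Ω := {ω | δ ≤ φ ω} ∩ {ω | g ω < 0} with hUdef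
      have hUm : MeasurableSet U :=
        (measurableSet_le measurable_const hφ).inter (measurableSet_lt hgm measurable_const)
      have e1 : M * (∫ ω in U, σ₁ ω ∂μ) ≤ ∫ ω in U, φ ω * σ₁ ω ∂μ := by
        rw [← integral_const_mul]
        refine setIntegral_mono_on_ae ((hσ₁int.const_mul M).integrableOn)
          ((hint σ₁ hσ₁).integrableOn) hUm ?_
        filter_upwards [hgeq] with ω hω hωU
        have hσω : σ₁ ω ≤ 0 := by rw [hω]; exact hωU.2.le
        exact mul_le_mul_of_nonpos_right (hφM ω) hσω
      have e2 : -(δ * C) ≤ ∫ ω in Uᶜ, φ ω * σ₁ ω ∂μ := by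
        have e3 : (∫ ω in Uᶜ, (-δ) * |σ₁ ω| ∂μ) ≤ ∫ ω in Uᶜ, φ ω * σ₁ ω ∂μ := by
          refine setIntegral_mono_on_ae ((hσ₁int.abs.const_mul (-δ)).integrableOn)
            ((hint σ₁ hσ₁).integrableOn) hUm.compl ?_
          filter_upwards [hgeq] with ω hω hωU
          rcases le_or_gt 0 (σ₁ ω) with h | h
          · nlinarith [mul_nonneg (hφ0 ω) h, abs_nonneg (σ₁ ω), hδ0.le]
          · have hφδ : φ ω < δ := by
              by_contra hcon
              push_neg at hcon
              exact hωU ⟨hcon, (hω.symm.trans_lt h : g ω < 0)⟩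
            have h4 : δ * σ₁ ω ≤ φ ω * σ₁ ω := mul_le_mul_of_nonpos_right hφδ.le h.le
            rw [abs_of_neg h]
            linarith
        rw [integral_const_mul] at e3
        have e4 : (∫ ω in Uᶜ, |σ₁ ω| ∂μ) ≤ C :=
          setIntegral_le_integral hσ₁int.abs (Filter.Eventually.of_forall fun ω => abs_nonneg _)
        have e5 : δ * (∫ ω in Uᶜ, |σ₁ ω| ∂μ) ≤ δ * C := mul_le_mul_of_nonneg_left e4 hδ0.le
        linarith
      have esplit : (∫ ω in U, φ ω * σ₁ ω ∂μ) + (∫ ω in Uᶜ, φ ω * σ₁ ω ∂μ)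
          = ∫ ω, φ ω * σ₁ ω ∂μ := integral_add_compl hUm (hint σ₁ hσ₁)
      have hcint : (∫ ω, φ ω * σ₁ ω ∂μ) = -c := by rw [hc]; ring
      have eU : (∫ ω in U, σ₁ ω ∂μ) < 0 := by nlinarith [e1, e2, esplit, hδC, hc0, hM]
      have hnbU : ¬ BddBelow ((fun σ : Ω → ℝ => ∫ ω in U, σ ω ∂μ) '' D) := by
        intro hbU
        have h1 : sInf ((fun σ : Ω → ℝ => ∫ ω in U, σ ω ∂μ) '' D) ≤ ∫ ω in U, σ₁ ω ∂μ :=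
          csInf_le hbU ⟨σ₁, hσ₁, rfl⟩
        rw [← hRN U hUm, hIσs U hUm] at h1
        linarith
      set P : ℝ := ∫ ω, max (σ₁ ω) 0 ∂μ with hPdef
      obtain ⟨x, hx, hxlt⟩ := not_bddBelow_iff.1 hnbU ((b - 1 - M * P) / δ)
      obtain ⟨σ₂, hσ₂, rfl⟩ := hx
      set τ : Ω → ℝ := fun ω => min (σ₂ ω) (σ₁ ω) with hτdef
      have hτD : τ ∈ D := hDmin σ₂ hσ₂ σ₁ hσ₁
      have hτint : Integrable τ μ := (hDint σ₂ hσ₂).inf hσ₁int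
      have hτpos : Integrable (fun ω => max (τ ω) 0) μ := hτint.pos_part
      have k1 : (∫ ω in U, φ ω * τ ω ∂μ)
          ≤ ∫ ω in U, (δ * τ ω + M * max (τ ω) 0) ∂μ := by
        refine setIntegral_mono_on ((hint τ hτD).integrableOn)
          (((hτint.const_mul δ).add (hτpos.const_mul M)).integrableOn) hUm ?_
        intro ω hω
        exact hδgen δ hδ0.le τ ω hω.1
      have k2 : (∫ ω in Uᶜ, φ ω * τ ω ∂μ) ≤ ∫ ω in Uᶜ, M * max (τ ω) 0 ∂μ :=
        setIntegral_mono ((hint τ hτD).integrableOn) ((hτpos.const_mul M).integrableOn)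
          fun ω => hgen τ ω
      have k3 : (∫ ω in U, (δ * τ ω + M * max (τ ω) 0) ∂μ)
          = δ * (∫ ω in U, τ ω ∂μ) + ∫ ω in U, M * max (τ ω) 0 ∂μ := by
        rw [integral_add ((hτint.const_mul δ).integrableOn) ((hτpos.const_mul M).integrableOn),
          integral_const_mul]
      have k4 : (∫ ω in U, M * max (τ ω) 0 ∂μ) + (∫ ω in Uᶜ, M * max (τ ω) 0 ∂μ)
          = M * ∫ ω, max (τ ω) 0 ∂μ := by
        rw [integral_add_compl hUm (hτpos.const_mul M), integral_const_mul]
      have k5 : (∫ ω in U, τ ω ∂μ) ≤ ∫ ω in U, σ₂ ω ∂μ :=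
        setIntegral_mono (hτint.integrableOn) ((hDint σ₂ hσ₂).integrableOn)
          fun ω => min_le_left _ _
      have k6 : (∫ ω, max (τ ω) 0 ∂μ) ≤ P :=
        integral_mono hτpos hσ₁int.pos_part fun ω => max_le_max (min_le_right _ _) le_rfl
      have k7 : (∫ ω in U, φ ω * τ ω ∂μ) + (∫ ω in Uᶜ, φ ω * τ ω ∂μ)
          = ∫ ω, φ ω * τ ω ∂μ := integral_add_compl hUm (hint τ hτD)
      have k8 : δ * (∫ ω in U, τ ω ∂μ) ≤ δ * ((b - 1 - M * P) / δ) :=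
        mul_le_mul_of_nonneg_left (k5.trans hxlt.le) hδ0.le
      have k9 : δ * ((b - 1 - M * P) / δ) = b - 1 - M * P := by
        rw [mul_comm, div_mul_cancel₀ _ (ne_of_gt hδ0)]
      have k10 : M * (∫ ω, max (τ ω) 0 ∂μ) ≤ M * P := mul_le_mul_of_nonneg_left k6 hM.le
      have hble : b ≤ ∫ ω, φ ω * τ ω ∂μ := hb ⟨τ, hτD, rfl⟩
      linarith
    -- arbitrarily small weighted integrals exist
    have hub : ∀ ε : ℝ, 0 < ε → ∃ σ ∈ D, (∫ ω, φ ω * σ ω ∂μ) < ε := by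
      intro ε hε
      set P : ℝ := ∫ ω, max (σ₀ ω) 0 ∂μ with hPdef
      have hP0 : 0 ≤ P := integral_nonneg fun ω => le_max_right _ _
      set δ : ℝ := ε / (2 * (P + 1)) with hδdef
      have hδ0 : 0 < δ := div_pos hε (by linarith)
      have hδP : δ * P < ε / 2 := by
        have := frac_lt_half hε hP0
        rw [hδdef]
        nlinarith
      set n : ℕ := Nat.floor (M / δ) + 1 with hndef
      have hMn : M < δ * n := by
        have h1 : M / δ < (n : ℝ) := by
          have h2 := Nat.lt_floor_add_one (M / δ)
          rw [hndef]; push_cast; exact h2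
        have h3 := mul_lt_mul_of_pos_right h1 hδ0
        rw [div_mul_cancel₀ M hδ0.ne'] at h3
        linarith
      set A : ℝ := (n : ℝ) * (δ * n) with hAdef
      have hA0 : 0 ≤ A := mul_nonneg (Nat.cast_nonneg n)
        (mul_nonneg hδ0.le (Nat.cast_nonneg n))
      set ε' : ℝ := ε / (2 * (A + 1)) with hε'def
      have hε'0 : 0 < ε' := div_pos hε (by linarith)
      have hAε' : A * ε' < ε / 2 := by
        have := frac_lt_half hε hA0
        rw [hε'def]
        nlinarith
      have hUcm : ∀ i : ℕ, MeasurableSet {ω : Ω | δ * (i:ℝ) ≤ φ ω ∧ φ ω < δ * (i:ℝ) + δ} := by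
        intro i
        rw [Set.setOf_and]
        exact (measurableSet_le measurable_const hφ).inter (measurableSet_lt hφ measurable_const)
      have hsim : ∀ m : ℕ, ∃ σ ∈ D, ∀ i : ℕ, i < m →
          (∫ ω in {ω : Ω | δ * (i:ℝ) ≤ φ ω ∧ φ ω < δ * (i:ℝ) + δ}, σ ω ∂μ) < ε' := by
        intro m
        induction m with
        | zero => exact ⟨σ₀, hσ₀D, fun i hi => absurd hi (Nat.not_lt_zero i)⟩
        | succ m ih =>
          obtain ⟨σa, hσa, ha⟩ := ih
          obtain ⟨σb, hσb, hbs⟩ :=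
            hsmall {ω : Ω | δ * (m:ℝ) ≤ φ ω ∧ φ ω < δ * (m:ℝ) + δ} (hUcm m) ε' hε'0
          refine ⟨fun ω => min (σa ω) (σb ω), hDmin σa hσa σb hσb, fun i hi => ?_⟩
          have hmint : Integrable (fun ω => min (σa ω) (σb ω)) μ :=
            (hDint σa hσa).inf (hDint σb hσb)
          rcases Nat.lt_succ_iff_lt_or_eq.1 hi with h | h
          · exact lt_of_le_of_lt (setIntegral_mono hmint.integrableOn
              ((hDint σa hσa).integrableOn) fun ω => min_le_left _ _) (ha i h)
          · subst h
            exact lt_of_le_of_lt (setIntegral_mono hmint.integrableOn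
              ((hDint σb hσb).integrableOn) fun ω => min_le_right _ _) hbs
      obtain ⟨σa, hσaD, hσaS⟩ := hsim n
      set τ : Ω → ℝ := fun ω => min (σa ω) (σ₀ ω) with hτdef
      have hτD : τ ∈ D := hDmin σa hσaD σ₀ hσ₀D
      have hτint : Integrable τ μ := (hDint σa hσaD).inf hσ₀int
      have hτpos : Integrable (fun ω => max (τ ω) 0) μ := hτint.pos_part
      have key : ∀ m : ℕ, m ≤ n →
          (∫ ω in {ω : Ω | φ ω < δ * (m:ℝ)}, φ ω * τ ω ∂μ)
            ≤ (m:ℝ) * ((δ * n) * ε')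
              + δ * ∫ ω in {ω : Ω | φ ω < δ * (m:ℝ)}, max (τ ω) 0 ∂μ := by
        intro m
        induction m with
        | zero =>
          intro _
          have hW0 : {ω : Ω | φ ω < δ * ((0:ℕ):ℝ)} = ∅ := by
            ext ω
            simp only [Set.mem_setOf_eq, Set.mem_empty_iff_false, iff_false, not_lt,
              Nat.cast_zero, mul_zero]
            exact hφ0 ω
          rw [hW0]
          simp
        | succ m ih =>
          intro hm1
          have hm : m ≤ n := Nat.le_of_succ_le hm1
          have hmn : m < n := hm1
          have hWsplit : {ω : Ω | φ ω < δ * ((m+1:ℕ):ℝ)} =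
              {ω : Ω | φ ω < δ * (m:ℝ)} ∪ {ω : Ω | δ * (m:ℝ) ≤ φ ω ∧ φ ω < δ * (m:ℝ) + δ} := by
            ext ω
            simp only [Set.mem_setOf_eq, Set.mem_union]
            push_cast
            constructor
            · intro h
              rcases lt_or_ge (φ ω) (δ * (m:ℝ)) with h' | h'
              · exact Or.inl h'
              · exact Or.inr ⟨h', by nlinarith⟩
            · rintro (h | ⟨h1, h2⟩)
              · nlinarith [hδ0.le]
              · nlinarith
          have hdisj : Disjoint {ω : Ω | φ ω < δ * (m:ℝ)}
              {ω : Ω | δ * (m:ℝ) ≤ φ ω ∧ φ ω < δ * (m:ℝ) + δ} :=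
            Set.disjoint_left.mpr fun ω h1 h2 => absurd h2.1 (not_le.2 h1)
          rw [hWsplit]
          rw [setIntegral_union hdisj (hUcm m) ((hint τ hτD).integrableOn)
            ((hint τ hτD).integrableOn)]
          rw [setIntegral_union hdisj (hUcm m) (hτpos.integrableOn) (hτpos.integrableOn)]
          have u4 : (∫ ω in {ω : Ω | δ * (m:ℝ) ≤ φ ω ∧ φ ω < δ * (m:ℝ) + δ}, φ ω * τ ω ∂μ)
              ≤ ∫ ω in {ω : Ω | δ * (m:ℝ) ≤ φ ω ∧ φ ω < δ * (m:ℝ) + δ},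
                  ((δ * (m:ℝ)) * τ ω + δ * max (τ ω) 0) ∂μ := by
            refine setIntegral_mono_on ((hint τ hτD).integrableOn)
              (((hτint.const_mul (δ * (m:ℝ))).add (hτpos.const_mul δ)).integrableOn)
              (hUcm m) ?_
            intro ω hω
            exact hgrid (δ * (m:ℝ)) δ (mul_nonneg hδ0.le (Nat.cast_nonneg m)) τ ω hω.1 hω.2
          rw [integral_add ((hτint.const_mul (δ * (m:ℝ))).integrableOn)
            ((hτpos.const_mul δ).integrableOn), integral_const_mul, integral_const_mul] at u4
          have u6 : (∫ ω in {ω : Ω | δ * (m:ℝ) ≤ φ ω ∧ φ ω < δ * (m:ℝ) + δ}, τ ω ∂μ)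
              ≤ ∫ ω in {ω : Ω | δ * (m:ℝ) ≤ φ ω ∧ φ ω < δ * (m:ℝ) + δ}, σa ω ∂μ :=
            setIntegral_mono hτint.integrableOn ((hDint σa hσaD).integrableOn)
              fun ω => min_le_left _ _
          have u7 : (∫ ω in {ω : Ω | δ * (m:ℝ) ≤ φ ω ∧ φ ω < δ * (m:ℝ) + δ}, τ ω ∂μ) ≤ ε' :=
            u6.trans (hσaS m hmn).le
          have u8 : (0:ℝ) ≤ δ * (m:ℝ) := mul_nonneg hδ0.le (Nat.cast_nonneg m)
          have u9 : δ * (m:ℝ) ≤ δ * (n:ℝ) :=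
            mul_le_mul_of_nonneg_left (Nat.cast_le.2 hm) hδ0.le
          have u5 : (δ * (m:ℝ)) * (∫ ω in {ω : Ω | δ * (m:ℝ) ≤ φ ω ∧ φ ω < δ * (m:ℝ) + δ},
              τ ω ∂μ) ≤ (δ * (n:ℝ)) * ε' :=
            (mul_le_mul_of_nonneg_left u7 u8).trans (mul_le_mul_of_nonneg_right u9 hε'0.le)
          have ihm := ih hm
          rw [show ((m+1:ℕ):ℝ) = (m:ℝ)+1 by push_cast; ring]
          linarith
      have hWn : {ω : Ω | φ ω < δ * ((n:ℕ):ℝ)} = Set.univ := by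
        ext ω
        simp only [Set.mem_setOf_eq, Set.mem_univ, iff_true]
        exact lt_of_le_of_lt (hφM ω) hMn
      have hkey := key n le_rfl
      rw [hWn] at hkey
      simp only [Measure.restrict_univ] at hkey
      have f1 : (∫ ω, max (τ ω) 0 ∂μ) ≤ P :=
        integral_mono hτpos hσ₀int.pos_part fun ω => max_le_max (min_le_right _ _) le_rfl
      have f2 : δ * (∫ ω, max (τ ω) 0 ∂μ) ≤ δ * P := mul_le_mul_of_nonneg_left f1 hδ0.le
      have f3 : (n:ℝ) * ((δ * n) * ε') = A * ε' := by rw [hAdef]; ring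
      exact ⟨τ, hτD, by linarith⟩
    -- conclude
    rw [hLHS]
    by_cases hbφ : BddBelow ((fun σ : Ω → ℝ => ∫ ω, φ ω * σ ω ∂μ) '' D)
    · refine le_antisymm ?_ ?_
      · refine le_csInf (hD.image _) ?_
        rintro x ⟨σ, hσ, rfl⟩
        exact hnn hbφ σ hσ
      · refine le_of_forall_pos_le_add' fun ε hε => ?_
        obtain ⟨σ, hσ, hlt⟩ := hub ε hε
        have h1 : sInf ((fun σ : Ω → ℝ => ∫ ω, φ ω * σ ω ∂μ) '' D)
            ≤ ∫ ω, φ ω * σ ω ∂μ := csInf_le hbφ ⟨σ, hσ, rfl⟩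
        linarith
    · rw [Real.sInf_of_not_bddBelow hbφ]
end

section
/- Let F be a distribution with density f and virtual value φ(x) = x - (1 - F(x))/f(x). If F is ρ-concave for some ρ > -1 (i.e., φ'(x) ≥ 1 + ρ everywhere), then combining the bounds R ≥ (ρ+1)(W - R) (revenue vs. consumer surplus) and W* - W ≤ ((1+ρ)^{1/ρ} + (ρ+2)/(ρ+1))·R (deadweight loss), where R is the revenue and W, W* the welfare of the revenue-optimal and welfare-optimal single-bidder mechanisms respectively, one obtains W* ≤ (e+4)/2 · (ρ+2)/(ρ+1) · R, using the inequality (1+ρ)^{1/ρ} ≤ (e/2)·(ρ+2)/(ρ+1) for ρ > -1 (with (1+ρ)^{1/ρ} := e at ρ = 0). -/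
noncomputable def gAux (x : ℝ) : ℝ :=
  x * (1 - Real.log 2) + x * Real.log (x + 2) - x * Real.log (x + 1) - Real.log (1 + x)

noncomputable def gAux1 (x : ℝ) : ℝ :=
  Real.log (x + 2) - Real.log (x + 1) - Real.log 2 + x / (x + 2)

lemma hd_gAux1 (x : ℝ) (hx : -1 < x) :
    HasDerivAt gAux1 (x / ((x + 1) * (x + 2) ^ 2)) x := by
  have h1 : (0:ℝ) < x + 1 := by linarith
  have h2 : (0:ℝ) < x + 2 := by linarith
  have d2 : HasDerivAt (fun y : ℝ => Real.log (y + 2)) (1 / (x + 2)) x := by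
    have := ((hasDerivAt_id x).add_const 2).log h2.ne'
    simpa using this
  have d1 : HasDerivAt (fun y : ℝ => Real.log (y + 1)) (1 / (x + 1)) x := by
    have := ((hasDerivAt_id x).add_const 1).log h1.ne'
    simpa using this
  have d3 : HasDerivAt (fun y : ℝ => y / (y + 2))
      ((1 * (x + 2) - x * 1) / (x + 2) ^ 2) x :=
    (hasDerivAt_id x).div ((hasDerivAt_id x).add_const 2) h2.ne'
  have := ((d2.sub d1).sub_const (Real.log 2)).add d3
  refine HasDerivAt.congr_deriv this ?_
  field_simp
  ring

lemma hd_gAux (x : ℝ) (hx : -1 < x) : HasDerivAt gAux (gAux1 x) x := by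
  have h1 : (0:ℝ) < x + 1 := by linarith
  have h2 : (0:ℝ) < x + 2 := by linarith
  have h1' : (0:ℝ) < 1 + x := by linarith
  have d2 : HasDerivAt (fun y : ℝ => Real.log (y + 2)) (1 / (x + 2)) x := by
    have := ((hasDerivAt_id x).add_const 2).log h2.ne'
    simpa using this
  have d1 : HasDerivAt (fun y : ℝ => Real.log (y + 1)) (1 / (x + 1)) x := by
    have := ((hasDerivAt_id x).add_const 1).log h1.ne'
    simpa using this
  have d0 : HasDerivAt (fun y : ℝ => Real.log (1 + y)) (1 / (1 + x)) x := by
    have := ((hasDerivAt_id x).const_add 1).log h1'.ne'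
    simpa using this
  have dA : HasDerivAt (fun y : ℝ => y * (1 - Real.log 2)) (1 - Real.log 2) x := by
    simpa using (hasDerivAt_id x).mul_const (1 - Real.log 2)
  have dB : HasDerivAt (fun y : ℝ => y * Real.log (y + 2))
      (1 * Real.log (x + 2) + x * (1 / (x + 2))) x := (hasDerivAt_id x).mul d2
  have dC : HasDerivAt (fun y : ℝ => y * Real.log (y + 1))
      (1 * Real.log (x + 1) + x * (1 / (x + 1))) x := (hasDerivAt_id x).mul d1
  have := ((dA.add dB).sub dC).sub d0
  refine HasDerivAt.congr_deriv this ?_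
  unfold gAux1
  field_simp
  ring

lemma gAux1_nonneg (x : ℝ) (hx : -1 < x) : 0 ≤ gAux1 x := by
  have g10 : gAux1 0 = 0 := by simp [gAux1]
  rcases le_or_gt 0 x with h | h
  · -- monotone on [0, x]
    have mono : MonotoneOn gAux1 (Set.Icc 0 x) := by
      apply monotoneOn_of_deriv_nonneg (convex_Icc 0 x)
      · intro y hy
        exact (hd_gAux1 y (by linarith [hy.1])).continuousAt.continuousWithinAt
      · intro y hy
        rw [interior_Icc] at hy
        exact (hd_gAux1 y (by linarith [hy.1])).differentiableAt.differentiableWithinAt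
      · intro y hy
        rw [interior_Icc] at hy
        rw [(hd_gAux1 y (by linarith [hy.1])).deriv]
        have h1 : (0:ℝ) < y + 1 := by linarith [hy.1]
        exact div_nonneg hy.1.le (by positivity)
    have := mono (Set.left_mem_Icc.2 h) (Set.right_mem_Icc.2 h) h
    rwa [g10] at this
  · -- antitone on [x, 0]
    have anti : AntitoneOn gAux1 (Set.Icc x 0) := by
      apply antitoneOn_of_deriv_nonpos (convex_Icc x 0)
      · intro y hy
        exact (hd_gAux1 y (by linarith [hy.1])).continuousAt.continuousWithinAt
      · intro y hy
        rw [interior_Icc] at hy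
        exact (hd_gAux1 y (by linarith [hy.1])).differentiableAt.differentiableWithinAt
      · intro y hy
        rw [interior_Icc] at hy
        rw [(hd_gAux1 y (by linarith [hy.1])).deriv]
        have h1 : (0:ℝ) < y + 1 := by linarith [hy.1]
        have h2 : (0:ℝ) < (y + 2) ^ 2 := by nlinarith [hy.1]
        have hy0 : y ≤ 0 := le_of_lt hy.2
        exact div_nonpos_of_nonpos_of_nonneg hy0 (by positivity)
    have := anti (Set.left_mem_Icc.2 h.le) (Set.right_mem_Icc.2 h.le) h.le
    rwa [g10] at this

lemma gAux_sign (x : ℝ) (hx : -1 < x) :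
    (0 ≤ x → 0 ≤ gAux x) ∧ (x ≤ 0 → gAux x ≤ 0) := by
  have g0 : gAux 0 = 0 := by simp [gAux]
  have mono : ∀ a b : ℝ, -1 < a → MonotoneOn gAux (Set.Icc a b) := by
    intro a b ha
    apply monotoneOn_of_deriv_nonneg (convex_Icc a b)
    · intro y hy
      exact (hd_gAux y (by linarith [hy.1])).continuousAt.continuousWithinAt
    · intro y hy
      rw [interior_Icc] at hy
      exact (hd_gAux y (by linarith [hy.1])).differentiableAt.differentiableWithinAt
    · intro y hy
      rw [interior_Icc] at hy
      rw [(hd_gAux y (by linarith [hy.1])).deriv]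
      exact gAux1_nonneg y (by linarith [hy.1])
  constructor
  · intro h
    have := mono 0 x (by norm_num) (Set.left_mem_Icc.2 h) (Set.right_mem_Icc.2 h) h
    rwa [g0] at this
  · intro h
    have := mono x 0 hx (Set.left_mem_Icc.2 h) (Set.right_mem_Icc.2 h) h
    rwa [g0] at this

lemma key_ineq (ρ : ℝ) (hρ : -1 < ρ) :
    (if ρ = 0 then Real.exp 1 else (1 + ρ) ^ (1 / ρ)) ≤
      (Real.exp 1 / 2) * ((ρ + 2) / (ρ + 1)) := by
  have h1 : (0:ℝ) < ρ + 1 := by linarith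
  have h2 : (0:ℝ) < ρ + 2 := by linarith
  have hrhs : (Real.exp 1 / 2) * ((ρ + 2) / (ρ + 1)) =
      Real.exp (1 - Real.log 2 + Real.log (ρ + 2) - Real.log (ρ + 1)) := by
    rw [Real.exp_sub, Real.exp_add, Real.exp_sub, Real.exp_log h2, Real.exp_log h1]
    rw [Real.exp_log (by norm_num : (0:ℝ) < 2)]
    ring
  by_cases h0 : ρ = 0
  · subst h0
    simp only [if_pos rfl]
    rw [hrhs]
    norm_num
  · rw [if_neg h0, hrhs]
    have h1ρ : (0:ℝ) < 1 + ρ := by linarith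
    rw [Real.rpow_def_of_pos h1ρ]
    apply Real.exp_le_exp.2
    have hg := gAux_sign ρ hρ
    rcases lt_or_gt_of_ne h0 with hneg | hpos
    · have hle := hg.2 hneg.le
      unfold gAux at hle
      rw [mul_one_div, div_le_iff_of_neg hneg]
      nlinarith [hle]
    · have hle := hg.1 hpos.le
      unfold gAux at hle
      rw [mul_one_div, div_le_iff₀ hpos]
      nlinarith [hle]

open Classical in
/-- ρ-concave revenue bound (algebraic combination): from `R ≥ (ρ+1)(W - R)` and the
deadweight-loss bound `W* - W ≤ ((1+ρ)^{1/ρ} + (ρ+2)/(ρ+1))·R`, using the elementary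
inequality `(1+ρ)^{1/ρ} ≤ (e/2)·(ρ+2)/(ρ+1)` for `ρ > -1` (with `(1+ρ)^{1/ρ} := e`
at `ρ = 0`), one obtains `W* ≤ ((e+4)/2)·((ρ+2)/(ρ+1))·R`. -/
theorem rho_concave_revenue_bound (ρ R W Wstar : ℝ) (hρ : -1 < ρ) (hR : 0 ≤ R)
    (h1 : (ρ + 1) * (W - R) ≤ R)
    (h2 : Wstar - W ≤
      ((if ρ = 0 then Real.exp 1 else (1 + ρ) ^ (1 / ρ)) + (ρ + 2) / (ρ + 1)) * R) :
    (if ρ = 0 then Real.exp 1 else (1 + ρ) ^ (1 / ρ)) ≤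
        (Real.exp 1 / 2) * ((ρ + 2) / (ρ + 1)) ∧
    Wstar ≤ (Real.exp 1 + 4) / 2 * ((ρ + 2) / (ρ + 1)) * R := by
  have hk := key_ineq ρ hρ
  refine ⟨hk, ?_⟩
  have hp1 : (0:ℝ) < ρ + 1 := by linarith
  have hW : W ≤ (ρ + 2) / (ρ + 1) * R := by
    rw [div_mul_eq_mul_div, le_div_iff₀ hp1]
    nlinarith
  have hA : Wstar ≤ W + ((Real.exp 1 / 2) * ((ρ + 2) / (ρ + 1)) + (ρ + 2) / (ρ + 1)) * R := by
    have := mul_le_mul_of_nonneg_right (add_le_add_right hk ((ρ + 2) / (ρ + 1))) hR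
    linarith [h2, this]
  have : Wstar ≤ (ρ + 2) / (ρ + 1) * R +
      ((Real.exp 1 / 2) * ((ρ + 2) / (ρ + 1)) + (ρ + 2) / (ρ + 1)) * R := by
    linarith
  calc Wstar ≤ _ := this
    _ = (Real.exp 1 + 4) / 2 * ((ρ + 2) / (ρ + 1)) * R := by ring
end
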